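/- arXiv:2205.05838 — 6 statements merged into one kernel-verified Lean document; each statement's English description precedes it below -/
import Mathlib

section
/- Let n ≥ 1 and let C, D ∈ ℝ^{n×n} be symmetric matrices. For every matrix P ∈ ℝ^{n×n} whose row sums and column sums all equal 1 (i.e., P·1 = 1 and Pᵀ·1 = 1, where 1 is the all-ones vector), the quadruple sum Σ_{i,j,k,l} (C_{ij} − D_{kl})² P_{ik} P_{jl} equals ‖C‖_F² + ‖D‖_F² − 2·tr(C P D Pᵀ). -/
open Matrix BigOperators

/-- Koopmans-Beckmann form of the Gromov-Wasserstein objective: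
for symmetric `C, D` and a coupling `P` with all row and column sums equal to `1`,
`∑ (C i j - D k l)² P i k * P j l = ‖C‖_F² + ‖D‖_F² - 2 tr (C P D Pᵀ)`. -/
theorem gw_koopmans_beckmann (n : ℕ) (hn : 1 ≤ n) (C D P : Matrix (Fin n) (Fin n) ℝ)
    (hC : C.IsSymm) (hD : D.IsSymm)
    (hrow : P *ᵥ (fun _ => (1 : ℝ)) = fun _ => 1)
    (hcol : Pᵀ *ᵥ (fun _ => (1 : ℝ)) = fun _ => 1) :
    ∑ i, ∑ j, ∑ k, ∑ l, (C i j - D k l) ^ 2 * P i k * P j l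
      = (∑ i, ∑ j, (C i j) ^ 2) + (∑ i, ∑ j, (D i j) ^ 2)
        - 2 * Matrix.trace (C * P * D * Pᵀ) := by
  have hr : ∀ i, ∑ k, P i k = 1 := by
    intro i
    have := congrFun hrow i
    simpa [Matrix.mulVec, dotProduct] using this
  have hc : ∀ k, ∑ i, P i k = 1 := by
    intro k
    have := congrFun hcol k
    simpa [Matrix.mulVec, dotProduct, Matrix.transpose_apply] using this
  have hCs : ∀ i j, C j i = C i j := fun i j => by
    have := congrFun (congrFun hC i) j; simpa [Matrix.transpose_apply] using this
  have key : ∀ (a : ℝ) (f g : Fin n → ℝ),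
      ∑ k, ∑ l, a * (f k * g l) = a * ((∑ k, f k) * (∑ l, g l)) := by
    intro a f g
    rw [Finset.sum_mul_sum, Finset.mul_sum]
    exact Finset.sum_congr rfl fun k _ => by rw [Finset.mul_sum]
  -- expand the square
  have expand : ∀ i j k l : Fin n,
      (C i j - D k l) ^ 2 * P i k * P j l
        = C i j ^ 2 * (P i k * P j l) + D k l ^ 2 * (P i k * P j l)
          - 2 * (C i j * D k l * P i k * P j l) := by
    intro i j k l; ring
  simp only [expand]
  have hsplit :
      ∑ i, ∑ j, ∑ k, ∑ l,
        (C i j ^ 2 * (P i k * P j l) + D k l ^ 2 * (P i k * P j l)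
          - 2 * (C i j * D k l * P i k * P j l))
      = (∑ i, ∑ j, ∑ k, ∑ l, C i j ^ 2 * (P i k * P j l))
        + (∑ i, ∑ j, ∑ k, ∑ l, D k l ^ 2 * (P i k * P j l))
        - 2 * ∑ i, ∑ j, ∑ k, ∑ l, C i j * D k l * P i k * P j l := by
    simp [Finset.sum_add_distrib, Finset.sum_sub_distrib, Finset.mul_sum]
  rw [hsplit]
  have hA : (∑ i, ∑ j, ∑ k, ∑ l, C i j ^ 2 * (P i k * P j l))
      = ∑ i, ∑ j, C i j ^ 2 := by
    refine Finset.sum_congr rfl fun i _ => Finset.sum_congr rfl fun j _ => ?_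
    rw [key (C i j ^ 2) (fun k => P i k) (fun l => P j l), hr, hr]
    ring
  have hB : (∑ i, ∑ j, ∑ k, ∑ l, D k l ^ 2 * (P i k * P j l))
      = ∑ k, ∑ l, D k l ^ 2 := by
    have e1 : ∀ i : Fin n, (∑ j, ∑ k, ∑ l, D k l ^ 2 * (P i k * P j l))
        = ∑ k, ∑ l, ∑ j, D k l ^ 2 * (P i k * P j l) := by
      intro i
      rw [Finset.sum_comm]
      exact Finset.sum_congr rfl fun k _ => Finset.sum_comm
    simp only [e1]
    rw [Finset.sum_comm]
    have e2 : ∀ k : Fin n, (∑ i, ∑ l, ∑ j, D k l ^ 2 * (P i k * P j l))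
        = ∑ l, ∑ i, ∑ j, D k l ^ 2 * (P i k * P j l) := fun k => Finset.sum_comm
    simp only [e2]
    refine Finset.sum_congr rfl fun k _ => Finset.sum_congr rfl fun l _ => ?_
    rw [key (D k l ^ 2) (fun i => P i k) (fun j => P j l), hc, hc]
    ring
  have hT : (∑ i, ∑ j, ∑ k, ∑ l, C i j * D k l * P i k * P j l)
      = Matrix.trace (C * P * D * Pᵀ) := by
    have htr : Matrix.trace (C * P * D * Pᵀ)
        = ∑ a, ∑ b, ∑ c, ∑ d, C a b * P b c * D c d * P a d := by
      simp only [Matrix.trace, Matrix.diag_apply, Matrix.mul_apply,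
        Matrix.transpose_apply, Finset.sum_mul, Finset.mul_sum]
      refine Finset.sum_congr rfl fun a _ => ?_
      rw [Finset.sum_comm]
      have e3 : ∀ c : Fin n, (∑ d, ∑ b, C a b * P b c * D c d * P a d)
          = ∑ b, ∑ d, C a b * P b c * D c d * P a d := fun c => Finset.sum_comm
      simp only [e3]
      rw [Finset.sum_comm]
    rw [htr, Finset.sum_comm]
    refine Finset.sum_congr rfl fun j _ => Finset.sum_congr rfl fun i _ =>
      Finset.sum_congr rfl fun k _ => Finset.sum_congr rfl fun l _ => ?_
    rw [← hCs i j]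
    ring
  rw [hA, hB, hT]
end

section
/- Let n ≥ 1 and let C, D ∈ ℝ^{n×n} be symmetric matrices with eigenvalues λ₁↓(C) ≥ … ≥ λ_n↓(C) and λ₁↓(D) ≥ … ≥ λ_n↓(D) listed in descending order. Then the maximum of tr(C P D Pᵀ) over all orthogonal matrices P ∈ O_n := {P ∈ ℝ^{n×n} : Pᵀ P = I} equals Σ_{i=1}^n λᵢ↓(C)·λᵢ↓(D), and this maximum is attained at P = P_C P_Dᵀ, where the columns of P_C (respectively P_D) form an orthonormal eigenbasis of C (respectively D) ordered consistently with the descending eigenvalues. -/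
open Matrix BigOperators

noncomputable section

/-- Squared Frobenius norm of a real matrix. -/
def frobSq {m n : ℕ} (A : Matrix (Fin m) (Fin n) ℝ) : ℝ := ∑ i, ∑ j, (A i j) ^ 2

/-- Euclidean norm of a real vector. -/
def vnorm {n : ℕ} (v : Fin n → ℝ) : ℝ := Real.sqrt (∑ i, (v i) ^ 2)

/-- Eigenvalues of a real symmetric (Hermitian) matrix, listed in descending order. -/
def eigDesc {n : ℕ} {A : Matrix (Fin n) (Fin n) ℝ} (hA : A.IsHermitian) : Fin n → ℝ :=
  fun i => (hA.eigenvalues ∘ Tuple.sort hA.eigenvalues) i.rev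

/-- Conjugating a real symmetric (Hermitian) matrix preserves symmetry. -/
theorem conjHerm {n m : ℕ} (V : Matrix (Fin n) (Fin m) ℝ) {C : Matrix (Fin n) (Fin n) ℝ}
    (hC : C.IsHermitian) : (Vᵀ * C * V).IsHermitian := by
  have h := Matrix.isHermitian_mul_mul_conjTranspose Vᵀ hC
  simpa using h

lemma eigDesc_antitone {n : ℕ} {A : Matrix (Fin n) (Fin n) ℝ} (hA : A.IsHermitian) :
    Antitone (eigDesc hA) := fun _ _ hij =>
  Tuple.monotone_sort hA.eigenvalues (Fin.rev_le_rev.mpr hij)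

lemma exists_ortho_decomp {n : ℕ} {A : Matrix (Fin n) (Fin n) ℝ} (hA : A.IsHermitian) :
    ∃ P : Matrix (Fin n) (Fin n) ℝ, Pᵀ * P = 1 ∧ A = P * Matrix.diagonal (eigDesc hA) * Pᵀ := by
  set U : Matrix (Fin n) (Fin n) ℝ := (hA.eigenvectorUnitary : Matrix (Fin n) (Fin n) ℝ) with hU
  set π : Equiv.Perm (Fin n) := Fin.revPerm.trans (Tuple.sort hA.eigenvalues) with hπ
  have hUs : Uᵀ * U = 1 := by
    have := (Matrix.mem_unitaryGroup_iff'.mp hA.eigenvectorUnitary.2)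
    simpa [star_eq_conjTranspose] using this
  have hdiag : Matrix.diagonal (eigDesc hA) = (Matrix.diagonal hA.eigenvalues).submatrix π π := by
    rw [Matrix.submatrix_diagonal_equiv]
    rfl
  refine ⟨U.submatrix id π, ?_, ?_⟩
  · rw [Matrix.transpose_submatrix]
    simp only [← Equiv.coe_refl]
    rw [Matrix.submatrix_mul_equiv Uᵀ U _ (Equiv.refl _) _, hUs, Matrix.submatrix_one_equiv]
  · rw [hdiag, Matrix.transpose_submatrix]
    simp only [← Equiv.coe_refl]
    rw [Matrix.submatrix_mul_equiv U (Matrix.diagonal hA.eigenvalues) _ π _,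
      Matrix.submatrix_mul_equiv (U * Matrix.diagonal hA.eigenvalues) Uᵀ _ π _]
    have := hA.spectral_theorem
    simpa [star_eq_conjTranspose] using this

lemma trace_diag_conj {n : ℕ} (a b : Fin n → ℝ) (Q : Matrix (Fin n) (Fin n) ℝ) :
    Matrix.trace (Matrix.diagonal a * Q * Matrix.diagonal b * Qᵀ)
      = ∑ i, ∑ j, a i * b j * (Q i j) ^ 2 := by
  simp [Matrix.trace, Matrix.diag_apply, Matrix.mul_apply, Matrix.transpose_apply,
    Matrix.diagonal_apply, Finset.sum_mul, Finset.mul_sum, ite_mul, mul_ite, zero_mul,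
    mul_zero, Finset.sum_ite_eq, Finset.sum_ite_eq']
  refine Finset.sum_congr rfl fun i _ => Finset.sum_congr rfl fun j _ => ?_
  ring

lemma sq_mem_doublyStochastic {n : ℕ} {Q : Matrix (Fin n) (Fin n) ℝ} (hQ : Qᵀ * Q = 1) :
    (Matrix.of fun i j => (Q i j) ^ 2) ∈ doublyStochastic ℝ (Fin n) := by
  have hQ' : Q * Qᵀ = 1 := mul_eq_one_comm.mp hQ
  rw [mem_doublyStochastic_iff_sum]
  refine ⟨fun i j => sq_nonneg _, fun i => ?_, fun j => ?_⟩
  · have h := congrFun (congrFun hQ' i) i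
    simpa [Matrix.mul_apply, pow_two, Matrix.one_apply] using h
  · have h := congrFun (congrFun hQ j) j
    simpa [Matrix.mul_apply, pow_two, Matrix.one_apply] using h

lemma sum_bound {n : ℕ} (a b : Fin n → ℝ) (ha : Antitone a) (hb : Antitone b)
    {S : Matrix (Fin n) (Fin n) ℝ} (hS : S ∈ doublyStochastic ℝ (Fin n)) :
    ∑ i, ∑ j, a i * b j * S i j ≤ ∑ i, a i * b i := by
  have hmono : Monovary a b := ha.monovary hb
  have hconv : S ∈ convexHull ℝ {M | ∃ σ : Equiv.Perm (Fin n), σ.permMatrix ℝ = M} := by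
    rw [← doublyStochastic_eq_convexHull_permMatrix]; exact hS
  have hlin : IsLinearMap ℝ (fun M : Matrix (Fin n) (Fin n) ℝ => ∑ i, ∑ j, a i * b j * M i j) := by
    constructor
    · intro M N
      simp [Matrix.add_apply, mul_add, Finset.sum_add_distrib]
    · intro c M
      simp [Matrix.smul_apply, Finset.mul_sum, smul_eq_mul]
      refine Finset.sum_congr rfl fun i _ => Finset.sum_congr rfl fun j _ => by ring
  have := convexHull_min ?_ (convex_halfSpace_le hlin (∑ i, a i * b i)) hconv
  · exact this
  · rintro M ⟨σ, rfl⟩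
    have h : ∀ i, ∑ j, a i * b j * (σ.permMatrix ℝ) i j = a i * b (σ i) := by
      intro i
      simp [Equiv.Perm.permMatrix, PEquiv.toMatrix_apply, Equiv.toPEquiv_apply, mul_ite,
        Finset.sum_ite_eq]
    simp only [Set.mem_setOf_eq, h]
    exact hmono.sum_mul_comp_perm_le_sum_mul

lemma trace_conj_shift {n : ℕ} (A B PC PD P : Matrix (Fin n) (Fin n) ℝ) :
    Matrix.trace ((PC * A * PCᵀ) * P * (PD * B * PDᵀ) * Pᵀ)
      = Matrix.trace (A * (PCᵀ * P * PD) * B * (PCᵀ * P * PD)ᵀ) := by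
  have h1 : (PC * A * PCᵀ) * P * (PD * B * PDᵀ) * Pᵀ
      = PC * (A * (PCᵀ * P * PD) * B * (PDᵀ * Pᵀ)) := by
    simp only [mul_assoc]
  have h2 : A * (PCᵀ * P * PD) * B * (PCᵀ * P * PD)ᵀ
      = (A * (PCᵀ * P * PD) * B * (PDᵀ * Pᵀ)) * PC := by
    simp only [Matrix.transpose_mul, Matrix.transpose_transpose, mul_assoc]
  rw [h1, h2, Matrix.trace_mul_comm]

/-- The maximum of `tr (C P D Pᵀ)` over orthogonal `P` equals the inner product of the
descending eigenvalues of `C` and `D`, attained at `P = P_C P_Dᵀ` for any orthonormal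
eigenbases `P_C`, `P_D` ordered consistently with the descending eigenvalues. -/
theorem trace_max_orthogonal (n : ℕ) (hn : 1 ≤ n) (C D : Matrix (Fin n) (Fin n) ℝ)
    (hC : C.IsHermitian) (hD : D.IsHermitian) :
    IsGreatest ((fun P => Matrix.trace (C * P * D * Pᵀ)) ''
        {P : Matrix (Fin n) (Fin n) ℝ | Pᵀ * P = 1})
      (∑ i, eigDesc hC i * eigDesc hD i)
    ∧ ∀ PC PD : Matrix (Fin n) (Fin n) ℝ,
        PCᵀ * PC = 1 → PDᵀ * PD = 1 →
        C = PC * Matrix.diagonal (eigDesc hC) * PCᵀ →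
        D = PD * Matrix.diagonal (eigDesc hD) * PDᵀ →
        Matrix.trace (C * (PC * PDᵀ) * D * (PC * PDᵀ)ᵀ)
          = ∑ i, eigDesc hC i * eigDesc hD i := by
  obtain ⟨PC0, hPC0, hCdec⟩ := exists_ortho_decomp hC
  obtain ⟨PD0, hPD0, hDdec⟩ := exists_ortho_decomp hD
  have key : ∀ PC PD : Matrix (Fin n) (Fin n) ℝ, PCᵀ * PC = 1 → PDᵀ * PD = 1 →
      C = PC * Matrix.diagonal (eigDesc hC) * PCᵀ →
      D = PD * Matrix.diagonal (eigDesc hD) * PDᵀ →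
      Matrix.trace (C * (PC * PDᵀ) * D * (PC * PDᵀ)ᵀ)
        = ∑ i, eigDesc hC i * eigDesc hD i := by
    intro PC PD h1 h2 hCd hDd
    have hQ : PCᵀ * (PC * PDᵀ) * PD = 1 := by
      rw [← mul_assoc PCᵀ PC PDᵀ, h1, one_mul, h2]
    have h := trace_conj_shift (Matrix.diagonal (eigDesc hC)) (Matrix.diagonal (eigDesc hD))
      PC PD (PC * PDᵀ)
    rw [← hCd, ← hDd, hQ] at h
    rw [h]
    simp [Matrix.diagonal_mul_diagonal, Matrix.trace_diagonal]
  refine ⟨⟨⟨PC0 * PD0ᵀ, ?_, key PC0 PD0 hPC0 hPD0 hCdec hDdec⟩, ?_⟩, key⟩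
  · -- PC0 * PD0ᵀ is orthogonal
    show (PC0 * PD0ᵀ)ᵀ * (PC0 * PD0ᵀ) = 1
    have hPD0' : PD0 * PD0ᵀ = 1 := mul_eq_one_comm.mp hPD0
    calc (PC0 * PD0ᵀ)ᵀ * (PC0 * PD0ᵀ)
        = PD0 * (PC0ᵀ * PC0) * PD0ᵀ := by
          simp only [Matrix.transpose_mul, Matrix.transpose_transpose, mul_assoc]
      _ = 1 := by rw [hPC0, mul_one, hPD0']
  · -- upper bound
    rintro x ⟨P, hP, rfl⟩
    simp only [Set.mem_setOf_eq] at hP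
    have hPC0' : PC0 * PC0ᵀ = 1 := mul_eq_one_comm.mp hPC0
    set Q : Matrix (Fin n) (Fin n) ℝ := PC0ᵀ * P * PD0 with hQdef
    have hQ : Qᵀ * Q = 1 := by
      calc Qᵀ * Q = PD0ᵀ * (Pᵀ * ((PC0 * PC0ᵀ) * (P * PD0))) := by
            simp only [hQdef, Matrix.transpose_mul, Matrix.transpose_transpose, mul_assoc]
        _ = 1 := by
            rw [hPC0', one_mul, ← mul_assoc Pᵀ P PD0, hP, one_mul, hPD0]
    have hval : Matrix.trace (C * P * D * Pᵀ) = ∑ i, ∑ j,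
        eigDesc hC i * eigDesc hD j * (Q i j) ^ 2 := by
      have h := trace_conj_shift (Matrix.diagonal (eigDesc hC)) (Matrix.diagonal (eigDesc hD))
        PC0 PD0 P
      rw [← hCdec, ← hDdec, ← hQdef, trace_diag_conj] at h
      exact h
    show Matrix.trace (C * P * D * Pᵀ) ≤ _
    rw [hval]
    exact sum_bound _ _ (eigDesc_antitone hC) (eigDesc_antitone hD) (sq_mem_doublyStochastic hQ)

end
end

section
/- Let n ≥ 2 and fix a matrix V ∈ ℝ^{n×(n−1)} satisfying Vᵀ·1 = 0 and Vᵀ V = I_{n−1}. Then a matrix P ∈ ℝ^{n×n} satisfies both Pᵀ P = I and P·1 = Pᵀ·1 = 1 if and only if there exists an orthogonal matrix Q ∈ ℝ^{(n−1)×(n−1)} (i.e., Qᵀ Q = I_{n−1}) such that P = (1/n)·1 1ᵀ + V Q Vᵀ. That is, O_n ∩ E_n = {(1/n)·1 1ᵀ + V Q Vᵀ : Q ∈ O_{n−1}}. -/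
open Matrix BigOperators

lemma aux_trace_zero {n : ℕ} (A : Matrix (Fin n) (Fin n) ℝ)
    (h : Matrix.trace (Aᵀ * A) = 0) : A = 0 := by
  have h' : ∑ k, ∑ l, A l k * A l k = 0 := by
    simpa [Matrix.trace, Matrix.diag, Matrix.mul_apply, Matrix.transpose_apply] using h
  ext i j
  have hnn : ∀ k ∈ Finset.univ, (0:ℝ) ≤ ∑ l, A l k * A l k :=
    fun k _ => Finset.sum_nonneg fun l _ => mul_self_nonneg _
  have h2 := (Finset.sum_eq_zero_iff_of_nonneg hnn).mp h' j (Finset.mem_univ j)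
  have h3 := (Finset.sum_eq_zero_iff_of_nonneg
      (fun l _ => mul_self_nonneg (A l j))).mp h2 i (Finset.mem_univ i)
  simpa using mul_self_eq_zero.mp h3

/-- Characterization of `O_n ∩ E_n`: `P` is orthogonal with all row/column sums `1`
iff `P = (1/n)·1 1ᵀ + V Q Vᵀ` for some orthogonal `Q` of size `n-1`. -/
theorem orth_doubly_stochastic_param (n : ℕ) (hn : 2 ≤ n)
    (V : Matrix (Fin n) (Fin (n - 1)) ℝ)
    (hV1 : Vᵀ *ᵥ (fun _ => (1 : ℝ)) = 0) (hV2 : Vᵀ * V = 1)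
    (P : Matrix (Fin n) (Fin n) ℝ) :
    (Pᵀ * P = 1 ∧ (P *ᵥ (fun _ => (1 : ℝ)) = fun _ => 1)
        ∧ (Pᵀ *ᵥ (fun _ => (1 : ℝ)) = fun _ => 1)) ↔
      ∃ Q : Matrix (Fin (n - 1)) (Fin (n - 1)) ℝ, Qᵀ * Q = 1 ∧
        P = Matrix.of (fun _ _ => 1 / (n : ℝ)) + V * Q * Vᵀ := by
  have hn0 : (n:ℝ) ≠ 0 := Nat.cast_ne_zero.mpr (by omega)
  set J : Matrix (Fin n) (Fin n) ℝ := Matrix.of (fun _ _ => 1 / (n:ℝ)) with hJdef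
  have hVsum : ∀ j, ∑ i, V i j = 0 := by
    intro j
    have := congrFun hV1 j
    simpa [Matrix.mulVec, dotProduct, Matrix.transpose_apply] using this
  have hJV : J * V = 0 := by
    ext i j
    simp [Matrix.mul_apply, hJdef, ← Finset.mul_sum, hVsum]
  have hVJ : Vᵀ * J = 0 := by
    ext i j
    simp [Matrix.mul_apply, hJdef, ← Finset.sum_mul, hVsum, Matrix.transpose_apply]
  have hJJ : J * J = J := by
    ext i j
    simp [Matrix.mul_apply, hJdef, Finset.sum_const, Fintype.card_fin]
    field_simp
  have hJT : Jᵀ = J := by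
    ext i j; simp [hJdef, Matrix.transpose_apply]
  have hJ1 : J *ᵥ (fun _ => (1:ℝ)) = fun _ => 1 := by
    funext i
    simp [Matrix.mulVec, dotProduct, hJdef, Finset.sum_const, Fintype.card_fin]
    field_simp
  -- key : V * Vᵀ = 1 - J
  have key : V * Vᵀ = 1 - J := by
    set N : Matrix (Fin n) (Fin n) ℝ := 1 - J - V * Vᵀ with hNdef
    have hVVT : (V * Vᵀ) * (V * Vᵀ) = V * Vᵀ := by
      rw [Matrix.mul_assoc, ← Matrix.mul_assoc Vᵀ V Vᵀ, hV2, Matrix.one_mul]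
    have hNT : Nᵀ = N := by
      simp [hNdef, Matrix.transpose_sub, hJT, Matrix.transpose_mul]
    have hNN : N * N = N := by
      have hJVV : J * (V * Vᵀ) = 0 := by
        rw [← Matrix.mul_assoc, hJV, Matrix.zero_mul]
      have hVVJ : (V * Vᵀ) * J = 0 := by
        rw [Matrix.mul_assoc, hVJ, Matrix.mul_zero]
      simp only [hNdef, Matrix.sub_mul, Matrix.mul_sub, Matrix.one_mul, Matrix.mul_one,
        hJJ, hVVT, hJVV, hVVJ]
      abel
    have htrJ : Matrix.trace J = 1 := by
      simp [Matrix.trace, Matrix.diag, hJdef, Finset.sum_const, Fintype.card_fin]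
      field_simp
    have htrVV : Matrix.trace (V * Vᵀ) = (n : ℝ) - 1 := by
      rw [Matrix.trace_mul_comm, hV2]
      simp [Matrix.trace_one, Fintype.card_fin]
      push_cast [Nat.cast_sub (by omega : 1 ≤ n)]
      ring
    have htrN : Matrix.trace N = 0 := by
      simp [hNdef, Matrix.trace_sub, Matrix.trace_one, Fintype.card_fin, htrJ, htrVV]
    have hN0 : N = 0 := by
      apply aux_trace_zero
      rw [hNT, hNN, htrN]
    have hN0' : 1 - J - V * Vᵀ = 0 := hN0
    exact (sub_eq_zero.mp hN0').symm
  constructor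
  · rintro ⟨h1, h2, h3⟩
    have hP1 : ∀ j, ∑ k, P j k = 1 := by
      intro j
      have := congrFun h2 j
      simpa [Matrix.mulVec, dotProduct] using this
    have hPT1 : ∀ j, ∑ k, P k j = 1 := by
      intro j
      have := congrFun h3 j
      simpa [Matrix.mulVec, dotProduct, Matrix.transpose_apply] using this
    have hJP : J * P = J := by
      ext i j
      simp [Matrix.mul_apply, hJdef, ← Finset.mul_sum, hPT1]
    have hPJ : P * J = J := by
      ext i j
      simp [Matrix.mul_apply, hJdef, ← Finset.sum_mul, hP1]
    have hPTJ : Pᵀ * J = J := by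
      have := congrArg Matrix.transpose hJP
      simpa [Matrix.transpose_mul, hJT] using this
    have hJPT : J * Pᵀ = J := by
      have := congrArg Matrix.transpose hPJ
      simpa [Matrix.transpose_mul, hJT] using this
    refine ⟨Vᵀ * P * V, ?_, ?_⟩
    · have : (Vᵀ * P * V)ᵀ = Vᵀ * Pᵀ * V := by
        simp [Matrix.transpose_mul, Matrix.mul_assoc]
      rw [this]
      calc Vᵀ * Pᵀ * V * (Vᵀ * P * V)
          = Vᵀ * (Pᵀ * ((V * Vᵀ) * (P * V))) := by
            simp only [Matrix.mul_assoc]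
        _ = Vᵀ * (Pᵀ * (P * V)) - Vᵀ * (Pᵀ * (J * (P * V))) := by
            rw [key, Matrix.sub_mul, Matrix.one_mul, Matrix.mul_sub, Matrix.mul_sub]
        _ = 1 := by
            rw [← Matrix.mul_assoc J P V, hJP, hJV, Matrix.mul_zero, Matrix.mul_zero,
              sub_zero, ← Matrix.mul_assoc Pᵀ P V, h1, Matrix.one_mul, hV2]
    · have : V * (Vᵀ * P * V) * Vᵀ = (V * Vᵀ) * P * (V * Vᵀ) := by
        simp only [Matrix.mul_assoc]
      have e : (1 - J) * P * (1 - J) = P - J := by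
        rw [Matrix.sub_mul, Matrix.one_mul, hJP, Matrix.sub_mul, Matrix.mul_sub,
          Matrix.mul_sub, Matrix.mul_one, Matrix.mul_one, hPJ, hJJ]
        abel
      rw [this, key, e]
      abel
  · rintro ⟨Q, hQ, hP⟩
    have hPt : Pᵀ = J + V * Qᵀ * Vᵀ := by
      rw [hP]
      simp [Matrix.transpose_add, Matrix.transpose_mul, hJT, Matrix.mul_assoc]
    refine ⟨?_, ?_, ?_⟩
    · rw [hPt, hP, Matrix.add_mul, Matrix.mul_add, Matrix.mul_add, hJJ]
      have e1 : J * (V * Q * Vᵀ) = 0 := by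
        rw [← Matrix.mul_assoc, ← Matrix.mul_assoc, hJV, Matrix.zero_mul, Matrix.zero_mul]
      have e2 : V * Qᵀ * Vᵀ * J = 0 := by
        rw [Matrix.mul_assoc (V * Qᵀ) Vᵀ J, hVJ, Matrix.mul_zero]
      have e3 : V * Qᵀ * Vᵀ * (V * Q * Vᵀ) = 1 - J := by
        calc V * Qᵀ * Vᵀ * (V * Q * Vᵀ) = V * (Qᵀ * ((Vᵀ * V) * (Q * Vᵀ))) := by
              simp only [Matrix.mul_assoc]
          _ = V * Vᵀ := by
              rw [hV2, Matrix.one_mul, ← Matrix.mul_assoc Qᵀ Q Vᵀ, hQ, Matrix.one_mul]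
          _ = 1 - J := key
      rw [e1, e2, e3]
      abel
    · rw [hP, Matrix.add_mulVec, ← Matrix.mulVec_mulVec, ← Matrix.mulVec_mulVec, hV1]
      simp [hJ1]
    · rw [hPt, Matrix.add_mulVec, ← Matrix.mulVec_mulVec, ← Matrix.mulVec_mulVec, hV1]
      simp [hJ1]
end

section
/- Let n ≥ 2, let C, D ∈ ℝ^{n×n} be symmetric, and fix V ∈ ℝ^{n×(n−1)} with Vᵀ·1 = 0 and Vᵀ V = I_{n−1}. For every Q ∈ ℝ^{(n−1)×(n−1)}, setting P = (1/n)·1 1ᵀ + V Q Vᵀ, one has tr(C P D Pᵀ) = (1/n²)(1ᵀ C 1)(1ᵀ D 1) + tr(Ĉ Q D̂ Qᵀ) + tr(Êᵀ Q), where Ĉ := Vᵀ C V, D̂ := Vᵀ D V, and Ê := (2/n)·Vᵀ C 1 1ᵀ D V. -/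
open Matrix BigOperators

/-- Reduction of the objective `tr (C P D Pᵀ)` under the parametrization
`P = (1/n)·1 1ᵀ + V Q Vᵀ` to a quadratic-plus-linear objective in `Q`. -/
theorem trace_param_reduction (n : ℕ) (hn : 2 ≤ n)
    (C D : Matrix (Fin n) (Fin n) ℝ) (hC : C.IsSymm) (hD : D.IsSymm)
    (V : Matrix (Fin n) (Fin (n - 1)) ℝ)
    (hV1 : Vᵀ *ᵥ (fun _ => (1 : ℝ)) = 0) (hV2 : Vᵀ * V = 1)
    (Q : Matrix (Fin (n - 1)) (Fin (n - 1)) ℝ)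
    (P : Matrix (Fin n) (Fin n) ℝ)
    (hP : P = Matrix.of (fun _ _ => 1 / (n : ℝ)) + V * Q * Vᵀ) :
    Matrix.trace (C * P * D * Pᵀ)
      = (1 / (n : ℝ) ^ 2) * (∑ i, ∑ j, C i j) * (∑ i, ∑ j, D i j)
        + Matrix.trace ((Vᵀ * C * V) * Q * (Vᵀ * D * V) * Qᵀ)
        + Matrix.trace
            (((2 / (n : ℝ)) • (Vᵀ * C * (Matrix.of (fun _ _ => (1 : ℝ)) : Matrix (Fin n) (Fin n) ℝ) * D * V))ᵀ * Q) := by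
  set J : Matrix (Fin n) (Fin n) ℝ := Matrix.of (fun _ _ => (1 : ℝ)) with hJdef
  have hJ : (Matrix.of (fun _ _ => 1 / (n:ℝ)) : Matrix (Fin n) (Fin n) ℝ)
      = (1/(n:ℝ)) • J := by ext i j; simp [hJdef]
  have hJt : Jᵀ = J := by ext i j; simp [hJdef]
  have hPt : Pᵀ = (1/(n:ℝ)) • J + V * Qᵀ * Vᵀ := by
    rw [hP, hJ]
    simp [Matrix.transpose_add, Matrix.transpose_smul, Matrix.transpose_mul, hJt,
      Matrix.mul_assoc]
  rw [hPt, hP, hJ]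
  have expand :
      C * ((1/(n:ℝ)) • J + V * Q * Vᵀ) * D * ((1/(n:ℝ)) • J + V * Qᵀ * Vᵀ)
        = ((1/(n:ℝ)) * (1/(n:ℝ))) • (C * J * D * J)
          + (1/(n:ℝ)) • (C * J * D * (V * Qᵀ * Vᵀ))
          + (1/(n:ℝ)) • (C * (V * Q * Vᵀ) * D * J)
          + C * (V * Q * Vᵀ) * D * (V * Qᵀ * Vᵀ) := by
    simp only [Matrix.mul_add, Matrix.add_mul, Matrix.mul_smul, Matrix.smul_mul,
      smul_smul, smul_add]
    abel
  rw [expand]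
  simp only [Matrix.trace_add, Matrix.trace_smul, smul_eq_mul]
  -- Term 1
  have hsumJ : ∀ (A : Matrix (Fin n) (Fin n) ℝ), Matrix.trace (J * A) = ∑ i, ∑ j, A i j := by
    intro A
    simp only [Matrix.trace, Matrix.diag, Matrix.mul_apply, hJdef, Matrix.of_apply, one_mul]
    exact Finset.sum_comm
  have hJCJ : J * C * J = (∑ i, ∑ j, C i j) • J := by
    ext i j
    simp [Matrix.mul_apply, hJdef, Finset.sum_mul, Finset.mul_sum]
    exact Finset.sum_comm
  have hT1 : Matrix.trace (C * J * D * J) = (∑ i, ∑ j, C i j) * (∑ i, ∑ j, D i j) := by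
    have : Matrix.trace (C * J * D * J) = Matrix.trace ((J * C * J) * D) := by
      rw [Matrix.trace_mul_comm]
      rw [Matrix.mul_assoc, Matrix.mul_assoc, Matrix.mul_assoc]
    rw [this, hJCJ, Matrix.smul_mul, Matrix.trace_smul, hsumJ, smul_eq_mul]
  -- Term 4
  have hT4 : Matrix.trace (C * (V * Q * Vᵀ) * D * (V * Qᵀ * Vᵀ))
      = Matrix.trace ((Vᵀ * C * V) * Q * (Vᵀ * D * V) * Qᵀ) := by
    rw [show C * (V * Q * Vᵀ) * D * (V * Qᵀ * Vᵀ)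
        = (C * V * Q * (Vᵀ * D * V) * Qᵀ) * Vᵀ by noncomm_ring [Matrix.mul_assoc],
      Matrix.trace_mul_comm]
    noncomm_ring [Matrix.mul_assoc]
  -- cross terms
  have hT2 : Matrix.trace (C * J * D * (V * Qᵀ * Vᵀ))
      = Matrix.trace ((Vᵀ * C * J * D * V) * Qᵀ) := by
    rw [show C * J * D * (V * Qᵀ * Vᵀ) = (C * J * D * V * Qᵀ) * Vᵀ by
        noncomm_ring [Matrix.mul_assoc], Matrix.trace_mul_comm]
    noncomm_ring [Matrix.mul_assoc]
  have hT3 : Matrix.trace (C * (V * Q * Vᵀ) * D * J)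
      = Matrix.trace ((Vᵀ * C * J * D * V) * Qᵀ) := by
    have h1 : Matrix.trace (C * (V * Q * Vᵀ) * D * J)
        = Matrix.trace ((C * (V * Q * Vᵀ) * D * J)ᵀ) := (Matrix.trace_transpose _).symm
    rw [h1]
    have h2 : (C * (V * Q * Vᵀ) * D * J)ᵀ = J * D * V * Qᵀ * (Vᵀ * C) := by
      simp only [Matrix.transpose_mul, hJt, hC.eq, hD.eq, Matrix.transpose_transpose]
      noncomm_ring [Matrix.mul_assoc]
    rw [h2, Matrix.trace_mul_comm]
    noncomm_ring [Matrix.mul_assoc]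
  have hRHS : Matrix.trace
      (((2 / (n:ℝ)) • (Vᵀ * C * J * D * V))ᵀ * Q)
      = (2/(n:ℝ)) * Matrix.trace ((Vᵀ * C * J * D * V) * Qᵀ) := by
    rw [Matrix.transpose_smul, Matrix.smul_mul, Matrix.trace_smul, smul_eq_mul,
      ← Matrix.trace_transpose ((Vᵀ * C * J * D * V)ᵀ * Q), Matrix.transpose_mul,
      Matrix.transpose_transpose, Matrix.trace_mul_comm]
  rw [hT1, hT2, hT3, hT4, hRHS]
  ring
end

section
/- Let n ≥ 2, let C, D ∈ ℝ^{n×n} be symmetric, and fix V ∈ ℝ^{n×(n−1)} with Vᵀ·1 = 0 and Vᵀ V = I_{n−1}; write Ĉ := Vᵀ C V and D̂ := Vᵀ D V. Define OGW_lb(C,D) := (1/n²)·[ ‖C‖_F² + ‖D‖_F² − 2·Σ_{i=1}^{n−1} λᵢ↓(Ĉ)·λᵢ↓(D̂) − (4/n)·‖Vᵀ C 1‖·‖Vᵀ D 1‖ − (2/n²)·(1ᵀ C 1)(1ᵀ D 1) ]. Then OGW_lb(C,D) ≥ 0. -/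
open Matrix BigOperators

noncomputable section

/-- The closed-form lower bound `OGW_lb` of the orthogonal Gromov-Wasserstein discrepancy. -/
def OGWlb {n : ℕ} (V : Matrix (Fin n) (Fin (n - 1)) ℝ)
    (C D : Matrix (Fin n) (Fin n) ℝ) (hC : C.IsHermitian) (hD : D.IsHermitian) : ℝ :=
  (1 / (n : ℝ) ^ 2) * (frobSq C + frobSq D
    - 2 * ∑ i, eigDesc (conjHerm V hC) i * eigDesc (conjHerm V hD) i
    - (4 / (n : ℝ)) * vnorm ((Vᵀ * C) *ᵥ (fun _ => (1 : ℝ)))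
        * vnorm ((Vᵀ * D) *ᵥ (fun _ => (1 : ℝ)))
    - (2 / (n : ℝ) ^ 2) * ((∑ i, ∑ j, C i j) * (∑ i, ∑ j, D i j)))

/-- trace of the square of a real symmetric matrix is the sum of squared eigenvalues -/
lemma trace_sq_eq_sum_eig {k : ℕ} {A : Matrix (Fin k) (Fin k) ℝ} (hA : A.IsHermitian) :
    (A*A).trace = ∑ i, hA.eigenvalues i ^ 2 := by
  set U := (hA.eigenvectorUnitary : Matrix (Fin k) (Fin k) ℝ) with hUdef
  have hU : star U * U = 1 := Matrix.mem_unitaryGroup_iff'.mp hA.eigenvectorUnitary.2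
  set Dg : Matrix (Fin k) (Fin k) ℝ := Matrix.diagonal (RCLike.ofReal ∘ hA.eigenvalues) with hDg
  have h1 : A = U * Dg * star U := hA.spectral_theorem
  have h2 : A * A = U * (Dg * Dg) * star U := by
    rw [h1]; rw [show U * Dg * star U * (U * Dg * star U) = U * Dg * (star U * U) * Dg * star U by
      noncomm_ring]
    rw [hU]; noncomm_ring
  rw [h2, Matrix.trace_mul_cycle, ← mul_assoc, hU, one_mul]
  simp [hDg, Matrix.diagonal_mul_diagonal, Matrix.trace_diagonal, sq]

/-- sum of squares of descending eigenvalues equals the squared Frobenius norm -/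
lemma sum_eigDesc_sq {k : ℕ} {A : Matrix (Fin k) (Fin k) ℝ} (hA : A.IsHermitian) :
    ∑ i, eigDesc hA i ^ 2 = frobSq A := by
  have hsym : ∀ i j, A j i = A i j := by
    intro i j
    have := hA.apply i j
    simpa using this
  have h1 : ∑ i, eigDesc hA i ^ 2 = ∑ i, hA.eigenvalues i ^ 2 := by
    have e : Equiv.Perm (Fin k) := Fin.revPerm.trans (Tuple.sort hA.eigenvalues)
    exact Equiv.sum_comp (Fin.revPerm.trans (Tuple.sort hA.eigenvalues))
      (fun i => hA.eigenvalues i ^ 2)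
  rw [h1, ← trace_sq_eq_sum_eig hA]
  simp only [Matrix.trace, Matrix.diag, Matrix.mul_apply, frobSq, Finset.sum_apply]
  refine Finset.sum_congr rfl fun i _ => Finset.sum_congr rfl fun j _ => ?_
  rw [hsym i j, sq]

/-- key quadratic identity for the columns of V -/
lemma L1 {n : ℕ} (V : Matrix (Fin n) (Fin (n-1)) ℝ)
    (hM : ∀ i j, ∑ k, V i k * V j k = (if i = j then (1:ℝ) else 0) - 1/n)
    (x : Fin n → ℝ) :
    ∑ k, (∑ i, V i k * x i)^2 = ∑ i, (x i)^2 - (1/n) * (∑ i, x i)^2 := by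
  calc ∑ k, (∑ i, V i k * x i)^2
      = ∑ k, ∑ i, ∑ j, (V i k * x i) * (V j k * x j) := by
        refine Finset.sum_congr rfl fun k _ => ?_
        rw [sq, Finset.sum_mul_sum]
    _ = ∑ i, ∑ j, (x i * x j) * ∑ k, V i k * V j k := by
        rw [Finset.sum_comm]
        refine Finset.sum_congr rfl fun i _ => ?_
        rw [Finset.sum_comm]
        refine Finset.sum_congr rfl fun j _ => ?_
        rw [Finset.mul_sum]
        exact Finset.sum_congr rfl fun k _ => by ring
    _ = ∑ i, ∑ j, ((x i * x j) * (if i = j then (1:ℝ) else 0) - (1/n) * (x i * x j)) := by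
        refine Finset.sum_congr rfl fun i _ => Finset.sum_congr rfl fun j _ => ?_
        rw [hM i j]; ring
    _ = ∑ i, (x i)^2 - (1/n) * (∑ i, x i)^2 := by
        simp only [Finset.sum_sub_distrib]
        congr 1
        · refine Finset.sum_congr rfl fun i _ => ?_
          simp only [mul_ite, mul_one, mul_zero]
          rw [Finset.sum_ite_eq Finset.univ i (fun j => x i * x j)]
          simp [sq]
        · rw [sq, Finset.sum_mul_sum, Finset.mul_sum]
          refine Finset.sum_congr rfl fun i _ => ?_
          rw [Finset.mul_sum]

/-- orthogonal decomposition of the squared Frobenius norm -/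
lemma frob_decomp {n : ℕ} (hn : 2 ≤ n) (V : Matrix (Fin n) (Fin (n-1)) ℝ)
    (hM : ∀ i j, ∑ k, V i k * V j k = (if i = j then (1:ℝ) else 0) - 1/n)
    (C : Matrix (Fin n) (Fin n) ℝ) (hC : C.IsHermitian) :
    frobSq C = frobSq (Vᵀ * C * V)
      + (2/n) * (∑ k, (((Vᵀ * C) *ᵥ (fun _ => (1:ℝ))) k)^2)
      + (1/(n:ℝ)^2) * (∑ i, ∑ j, C i j)^2 := by
  have hsym : ∀ i j, C j i = C i j := by
    intro i j
    have := hC.apply i j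
    simpa using this
  set r : Fin n → ℝ := fun i => ∑ j, C i j with hr
  have hS : ∑ i, ∑ j, C i j = ∑ i, r i := rfl
  -- the mulVec term
  have h_mv : ∀ k, ((Vᵀ * C) *ᵥ (fun _ => (1:ℝ))) k = ∑ i, V i k * r i := by
    intro k
    simp only [Matrix.mulVec, dotProduct, Matrix.mul_apply, mul_one,
      Matrix.transpose_apply, hr]
    rw [Finset.sum_comm]
    exact Finset.sum_congr rfl fun i _ => by rw [Finset.mul_sum]
  have hx : ∑ k, (((Vᵀ * C) *ᵥ (fun _ => (1:ℝ))) k)^2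
      = ∑ i, (r i)^2 - (1/n) * (∑ i, r i)^2 := by
    simp only [h_mv]
    exact L1 V hM r
  -- frobSq of the conjugated matrix
  have hhat : frobSq (Vᵀ * C * V)
      = (frobSq C - (1/n) * ∑ i, (r i)^2) - (1/n) * (∑ i, (r i)^2 - (1/n) * (∑ i, r i)^2) := by
    have happ : ∀ a b, (Vᵀ * C * V) a b = ∑ i, V i a * ((C * V) i b) := by
      intro a b
      rw [Matrix.mul_assoc, Matrix.mul_apply]
      exact Finset.sum_congr rfl fun i _ => by rw [Matrix.transpose_apply]
    have hCV : ∀ i b, (C * V) i b = ∑ j, V j b * C i j := by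
      intro i b
      rw [Matrix.mul_apply]
      exact Finset.sum_congr rfl fun j _ => by ring
    have step1 : frobSq (Vᵀ * C * V)
        = ∑ b, (∑ i, ((C*V) i b)^2 - (1/n) * (∑ i, (C*V) i b)^2) := by
      unfold frobSq
      rw [Finset.sum_comm]
      refine Finset.sum_congr rfl fun b _ => ?_
      rw [← L1 V hM (fun i => (C*V) i b)]
      exact Finset.sum_congr rfl fun a _ => by rw [happ a b]
    rw [step1, Finset.sum_sub_distrib]
    congr 1
    · -- ∑ b ∑ i ((C*V) i b)^2 = frobSq C - (1/n) ∑ (r i)^2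
      rw [Finset.sum_comm]
      have : ∀ i, ∑ b, ((C*V) i b)^2 = ∑ j, (C i j)^2 - (1/n) * (r i)^2 := by
        intro i
        have := L1 V hM (fun j => C i j)
        rw [← this]
        exact Finset.sum_congr rfl fun b _ => by rw [hCV i b]
      rw [Finset.sum_congr rfl (fun i _ => this i), Finset.sum_sub_distrib, ← Finset.mul_sum]
      rfl
    · -- (1/n) * ∑ b (∑ i (C*V) i b)^2
      rw [← Finset.mul_sum]
      congr 1
      have hcol : ∀ b, ∑ i, (C*V) i b = ∑ j, V j b * r j := by
        intro b
        simp only [Matrix.mul_apply]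
        rw [Finset.sum_comm]
        refine Finset.sum_congr rfl fun j _ => ?_
        rw [← Finset.sum_mul, hr]
        simp only [Finset.sum_congr rfl (fun i _ => hsym i j)]
        ring
      rw [Finset.sum_congr rfl (fun b _ => congrArg (· ^ 2) (hcol b))]
      exact L1 V hM r
  rw [hhat, hx, hS]
  have hn0 : (n:ℝ) ≠ 0 := by positivity
  field_simp
  ring

/-- Nonnegativity of the closed-form lower bound `OGW_lb`. -/
theorem OGWlb_nonneg (n : ℕ) (hn : 2 ≤ n)
    (C D : Matrix (Fin n) (Fin n) ℝ) (hC : C.IsHermitian) (hD : D.IsHermitian)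
    (V : Matrix (Fin n) (Fin (n - 1)) ℝ)
    (hV1 : Vᵀ *ᵥ (fun _ => (1 : ℝ)) = 0) (hV2 : Vᵀ * V = 1) :
    0 ≤ OGWlb V C D hC hD := by
  have hnpos : (0:ℝ) < n := by positivity
  -- derive the Gram identity for the rows of V
  have hM : ∀ i j, ∑ k, V i k * V j k = (if i = j then (1:ℝ) else 0) - 1 / n := by
    have hss : (Real.sqrt n)⁻¹ * (Real.sqrt n)⁻¹ = (n : ℝ)⁻¹ := by
      rw [← mul_inv, Real.mul_self_sqrt hnpos.le]
    set w : Matrix (Fin n) (Fin 1) ℝ := Matrix.of (fun _ _ => (Real.sqrt n)⁻¹) with hw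
    have hwT : Vᵀ * w = 0 := by
      ext k j
      have := congrFun hV1 k
      simp only [Matrix.mulVec, dotProduct, mul_one, Pi.zero_apply] at this
      simp only [hw, Matrix.mul_apply, Matrix.of_apply, Matrix.zero_apply, ← Finset.sum_mul]
      simp only [Matrix.transpose_apply] at this ⊢
      rw [this, zero_mul]
    have hww : wᵀ * w = 1 := by
      ext i j
      simp [hw, Matrix.mul_apply, hss, Fin.fin_one_eq_zero i, Fin.fin_one_eq_zero j,
        Matrix.one_apply, mul_inv_cancel₀ hnpos.ne']
    have key : Matrix.fromRows Vᵀ wᵀ * Matrix.fromCols V w = 1 := by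
      rw [Matrix.fromRows_mul_fromCols, hV2, hww, hwT]
      have : wᵀ * V = 0 := by
        have := congrArg Matrix.transpose hwT
        simpa using this
      rw [this, Matrix.fromBlocks_one]
    have e : Fin n ≃ Fin (n-1) ⊕ Fin 1 := by
      refine (finCongr ?_).trans finSumFinEquiv.symm
      omega
    have key2 : Matrix.fromCols V w * Matrix.fromRows Vᵀ wᵀ = 1 :=
      (Matrix.fromCols_mul_fromRows_eq_one_comm e V w Vᵀ wᵀ).mpr key
    rw [Matrix.fromCols_mul_fromRows] at key2
    intro i j
    have h := congrFun (congrFun key2 i) j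
    simp only [Matrix.add_apply, Matrix.mul_apply, Matrix.one_apply] at h
    have hww2 : ∑ x : Fin 1, w i x * wᵀ x j = 1/n := by
      simp [hw, hss, one_div]
    rw [hww2] at h
    simp only [Matrix.transpose_apply] at h ⊢
    by_cases hij : i = j
    · rw [if_pos hij] at h ⊢; linarith
    · rw [if_neg hij] at h ⊢; linarith
  -- abbreviations
  set a := eigDesc (conjHerm V hC) with ha
  set b := eigDesc (conjHerm V hD) with hb
  set p := vnorm ((Vᵀ * C) *ᵥ (fun _ => (1 : ℝ))) with hp
  set q := vnorm ((Vᵀ * D) *ᵥ (fun _ => (1 : ℝ))) with hq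
  set S := ∑ i, ∑ j, C i j with hS
  set T := ∑ i, ∑ j, D i j with hT
  have hp2 : p^2 = ∑ k, (((Vᵀ * C) *ᵥ (fun _ => (1:ℝ))) k)^2 := by
    rw [hp]; unfold vnorm
    rw [Real.sq_sqrt (by positivity)]
  have hq2 : q^2 = ∑ k, (((Vᵀ * D) *ᵥ (fun _ => (1:ℝ))) k)^2 := by
    rw [hq]; unfold vnorm
    rw [Real.sq_sqrt (by positivity)]
  have hfC : frobSq C = (∑ i, a i ^2) + (2/n) * p^2 + (1/(n:ℝ)^2) * S^2 := by
    rw [ha, sum_eigDesc_sq, hp2, hS]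
    exact frob_decomp hn V hM C hC
  have hfD : frobSq D = (∑ i, b i ^2) + (2/n) * q^2 + (1/(n:ℝ)^2) * T^2 := by
    rw [hb, sum_eigDesc_sq, hq2, hT]
    exact frob_decomp hn V hM D hD
  have hE : (0:ℝ) ≤ ∑ i, (a i - b i)^2 := Finset.sum_nonneg fun i _ => sq_nonneg _
  have hEeq : ∑ i, (a i - b i)^2 = (∑ i, a i ^2) + (∑ i, b i ^2) - 2 * ∑ i, a i * b i := by
    have h := Finset.sum_congr rfl (fun i (_ : i ∈ (Finset.univ : Finset (Fin (n-1)))) =>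
      show (a i - b i)^2 = (a i^2 + b i^2) - 2*(a i * b i) from by ring)
    rw [h, Finset.sum_sub_distrib, Finset.sum_add_distrib, ← Finset.mul_sum]
  have hXeq : frobSq C + frobSq D - 2 * ∑ i, a i * b i - (4/(n:ℝ)) * p * q
      - (2/(n:ℝ)^2) * (S * T)
      = (∑ i, (a i - b i)^2) + (2/n) * (p - q)^2 + (1/(n:ℝ)^2) * (S - T)^2 := by
    rw [hfC, hfD, hEeq]; ring
  unfold OGWlb
  rw [← ha, ← hb, ← hp, ← hq, ← hS, ← hT, hXeq]
  have h1 : (0:ℝ) ≤ (2/(n:ℝ)) * (p - q)^2 := by positivity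
  have h2 : (0:ℝ) ≤ (1/(n:ℝ)^2) * (S - T)^2 := by positivity
  have h3 : (0:ℝ) ≤ 1/(n:ℝ)^2 := by positivity
  nlinarith

end
end

section
/- Let m ≥ n ≥ 2 and fix matrices U ∈ ℝ^{m×(m−1)} and V ∈ ℝ^{n×(n−1)} satisfying Uᵀ·1_m = 0, Uᵀ U = I_{m−1}, Vᵀ·1_n = 0, and Vᵀ V = I_{n−1}. Then a matrix P ∈ ℝ^{m×n} satisfies Pᵀ P = I_n, P·1_n = √(n/m)·1_m, and Pᵀ·1_m = √(m/n)·1_n if and only if there exists Q ∈ ℝ^{(m−1)×(n−1)} with Qᵀ Q = I_{n−1} such that P = (1/√(mn))·1_m 1_nᵀ + U Q Vᵀ. -/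
open Matrix BigOperators

lemma aux_complement (n : ℕ) (hn : 1 ≤ n) (V : Matrix (Fin n) (Fin (n - 1)) ℝ)
    (hV1 : Vᵀ *ᵥ (fun _ => (1 : ℝ)) = 0) (hV2 : Vᵀ * V = 1) :
    V * Vᵀ = 1 - ((n : ℝ))⁻¹ • (Matrix.of fun _ _ => (1 : ℝ)) := by
  have hn0 : (0 : ℝ) < n := by exact_mod_cast hn
  have hcolsum : ∀ k, ∑ i, V i k = 0 := by
    intro k
    have := congrFun hV1 k
    simpa [Matrix.mulVec, dotProduct] using this
  set W : Matrix (Fin n) (Fin 1 ⊕ Fin (n - 1)) ℝ :=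
    Matrix.of fun i j => Sum.elim (fun _ => (Real.sqrt n)⁻¹) (fun k => V i k) j with hW
  have hsq : (Real.sqrt n) * (Real.sqrt n) = n := Real.mul_self_sqrt hn0.le
  have hinv : (Real.sqrt n)⁻¹ * (Real.sqrt n)⁻¹ = (n : ℝ)⁻¹ := by
    rw [← mul_inv, hsq]
  have hWW : Wᵀ * W = 1 := by
    ext j k
    rcases j with j | j <;> rcases k with k | k <;>
      simp only [Matrix.mul_apply, Matrix.transpose_apply, hW, Matrix.of_apply, Sum.elim_inl,
        Sum.elim_inr, Matrix.one_apply]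
    · rw [if_pos (by rw [Subsingleton.elim j k]), Finset.sum_const]
      simp only [Finset.card_univ, Fintype.card_fin, nsmul_eq_mul, hinv]
      field_simp
    · rw [if_neg (by simp), ← Finset.mul_sum, hcolsum k, mul_zero]
    · rw [if_neg (by simp), ← Finset.sum_mul, hcolsum j, zero_mul]
    · have := congrFun (congrFun hV2 j) k
      simp only [Matrix.mul_apply, Matrix.transpose_apply, Matrix.one_apply] at this
      rw [this]
      simp [Sum.inr.injEq]
  have e : (Fin 1 ⊕ Fin (n - 1)) ≃ Fin n :=
    (finSumFinEquiv).trans (finCongr (by omega))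
  have hWW' : W * Wᵀ = 1 := (Matrix.mul_eq_one_comm_of_equiv e).mp hWW
  ext i j
  have h := congrFun (congrFun hWW' i) j
  simp only [Matrix.mul_apply, Matrix.transpose_apply, hW, Matrix.of_apply,
    Fintype.sum_sum_type, Sum.elim_inl, Sum.elim_inr, Finset.sum_const, Finset.card_univ,
    Fintype.card_fin, nsmul_eq_mul, Nat.cast_one, one_mul, hinv] at h
  simp only [Matrix.sub_apply, Matrix.smul_apply, Matrix.of_apply, smul_eq_mul, mul_one,
    Matrix.mul_apply, Matrix.transpose_apply]
  simp only [Matrix.one_apply] at h ⊢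
  linarith [h]

/-- Characterization of `Õ_{m,n} ∩ Ẽ` for graphs of different sizes: a semi-orthogonal
`m × n` matrix with the generalized marginal constraints is exactly of the form
`(1/√(mn))·1_m 1_nᵀ + U Q Vᵀ` with `Q` semi-orthogonal of size `(m-1) × (n-1)`. -/
theorem semi_orth_marginal_param (m n : ℕ) (hn : 2 ≤ n) (hmn : n ≤ m)
    (U : Matrix (Fin m) (Fin (m - 1)) ℝ) (V : Matrix (Fin n) (Fin (n - 1)) ℝ)
    (hU1 : Uᵀ *ᵥ (fun _ => (1 : ℝ)) = 0) (hU2 : Uᵀ * U = 1)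
    (hV1 : Vᵀ *ᵥ (fun _ => (1 : ℝ)) = 0) (hV2 : Vᵀ * V = 1)
    (P : Matrix (Fin m) (Fin n) ℝ) :
    (Pᵀ * P = 1
      ∧ (P *ᵥ (fun _ => (1 : ℝ)) = fun _ => Real.sqrt ((n : ℝ) / (m : ℝ)))
      ∧ (Pᵀ *ᵥ (fun _ => (1 : ℝ)) = fun _ => Real.sqrt ((m : ℝ) / (n : ℝ)))) ↔
    ∃ Q : Matrix (Fin (m - 1)) (Fin (n - 1)) ℝ, Qᵀ * Q = 1 ∧
      P = Matrix.of (fun _ _ => 1 / Real.sqrt ((m : ℝ) * (n : ℝ))) + U * Q * Vᵀ := by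
  have hm : 2 ≤ m := le_trans hn hmn
  have hm0 : (0 : ℝ) < m := by exact_mod_cast lt_of_lt_of_le (by norm_num) hm
  have hn0 : (0 : ℝ) < n := by exact_mod_cast lt_of_lt_of_le (by norm_num) hn
  have hsm : (0 : ℝ) < Real.sqrt m := Real.sqrt_pos.mpr hm0
  have hsn : (0 : ℝ) < Real.sqrt n := Real.sqrt_pos.mpr hn0
  have hsqm : Real.sqrt m * Real.sqrt m = (m : ℝ) := Real.mul_self_sqrt hm0.le
  have hsqn : Real.sqrt n * Real.sqrt n = (n : ℝ) := Real.mul_self_sqrt hn0.le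
  have hmul : Real.sqrt ((m : ℝ) * n) = Real.sqrt m * Real.sqrt n :=
    Real.sqrt_mul hm0.le _
  have hdmn : Real.sqrt ((m : ℝ) / n) = Real.sqrt m / Real.sqrt n :=
    Real.sqrt_div hm0.le _
  have hdnm : Real.sqrt ((n : ℝ) / m) = Real.sqrt n / Real.sqrt m :=
    Real.sqrt_div hn0.le _
  set a : ℝ := Real.sqrt m with haa
  set b : ℝ := Real.sqrt n with hbb
  have ha0 : a ≠ 0 := ne_of_gt hsm
  have hb0 : b ≠ 0 := ne_of_gt hsn
  -- all ones matrices
  set Jm : Matrix (Fin m) (Fin m) ℝ := Matrix.of fun _ _ => (1 : ℝ) with hJm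
  set Jn : Matrix (Fin n) (Fin n) ℝ := Matrix.of fun _ _ => (1 : ℝ) with hJn
  set Jmn : Matrix (Fin m) (Fin n) ℝ := Matrix.of fun _ _ => (1 : ℝ) with hJmn
  have hUU : U * Uᵀ = 1 - ((m : ℝ))⁻¹ • Jm :=
    aux_complement m (by omega) U hU1 hU2
  have hVV : V * Vᵀ = 1 - ((n : ℝ))⁻¹ • Jn :=
    aux_complement n (by omega) V hV1 hV2
  have hUtJ : Uᵀ * Jmn = 0 := by
    ext k j
    have := congrFun hU1 k
    simp only [Matrix.mulVec, dotProduct, Matrix.transpose_apply, mul_one,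
      Pi.zero_apply] at this
    simp only [Matrix.mul_apply, Matrix.transpose_apply, hJmn, Matrix.of_apply, mul_one,
      Matrix.zero_apply]
    exact this
  have hJV : Jmn * V = 0 := by
    ext i k
    have := congrFun hV1 k
    simp only [Matrix.mulVec, dotProduct, Matrix.transpose_apply, mul_one,
      Pi.zero_apply] at this
    simp only [Matrix.mul_apply, hJmn, Matrix.of_apply, one_mul, Matrix.zero_apply]
    exact this
  have hK : Matrix.of (fun _ _ => 1 / Real.sqrt ((m : ℝ) * (n : ℝ)))
      = (1 / Real.sqrt ((m : ℝ) * n)) • Jmn := by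
    ext i j; simp [hJmn]
  constructor
  · rintro ⟨h1, h2, h3⟩
    refine ⟨Uᵀ * P * V, ?_, ?_⟩
    · -- QᵀQ = 1
      have hJmP : Jm * P = Real.sqrt ((m : ℝ) / n) • Jmn := by
        ext i j
        have := congrFun h3 j
        simp only [Matrix.mulVec, dotProduct, Matrix.transpose_apply, mul_one] at this
        simp only [Matrix.mul_apply, hJm, hJmn, Matrix.of_apply, one_mul, Matrix.smul_apply,
          smul_eq_mul, mul_one]
        exact this
      calc (Uᵀ * P * V)ᵀ * (Uᵀ * P * V)
          = Vᵀ * (Pᵀ * ((U * Uᵀ) * (P * V))) := by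
            simp only [Matrix.transpose_mul, Matrix.transpose_transpose, Matrix.mul_assoc]
        _ = Vᵀ * (Pᵀ * (P * V)) - ((m : ℝ))⁻¹ • (Vᵀ * (Pᵀ * ((Jm * P) * V))) := by
            rw [hUU]
            simp only [Matrix.sub_mul, Matrix.mul_sub, Matrix.smul_mul, Matrix.mul_smul,
              Matrix.one_mul, Matrix.mul_one, smul_sub, Matrix.mul_assoc]
        _ = 1 := by
            rw [hJmP, Matrix.smul_mul, hJV, smul_zero, Matrix.mul_zero, Matrix.mul_zero,
              smul_zero, sub_zero, ← Matrix.mul_assoc Pᵀ P V, h1, Matrix.one_mul, hV2]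
    · -- P = K + U Q Vᵀ
      have hPJ : P * Jn = Real.sqrt ((n : ℝ) / m) • Jmn := by
        ext i j
        have := congrFun h2 i
        simp only [Matrix.mulVec, dotProduct, mul_one] at this
        simp only [Matrix.mul_apply, hJn, hJmn, Matrix.of_apply, mul_one, Matrix.smul_apply,
          smul_eq_mul]
        exact this
      have hJmP : Jm * P = Real.sqrt ((m : ℝ) / n) • Jmn := by
        ext i j
        have := congrFun h3 j
        simp only [Matrix.mulVec, dotProduct, Matrix.transpose_apply, mul_one] at this
        simp only [Matrix.mul_apply, hJm, hJmn, Matrix.of_apply, one_mul, Matrix.smul_apply,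
          smul_eq_mul, mul_one]
        exact this
      have hJJ : Jm * Jmn = (m : ℝ) • Jmn := by
        ext i j
        simp [hJm, hJmn, Matrix.mul_apply, Finset.sum_const]
      have key : U * (Uᵀ * P * V) * Vᵀ = P - (1 / Real.sqrt ((m : ℝ) * n)) • Jmn := by
        calc U * (Uᵀ * P * V) * Vᵀ = (U * Uᵀ) * (P * (V * Vᵀ)) := by
              simp only [Matrix.mul_assoc]
          _ = (1 - ((m : ℝ))⁻¹ • Jm) * (P * (1 - ((n : ℝ))⁻¹ • Jn)) := by rw [hUU, hVV]
          _ = P - ((n : ℝ))⁻¹ • (P * Jn) - ((m : ℝ))⁻¹ • (Jm * P)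
              + (((m : ℝ))⁻¹ * ((n : ℝ))⁻¹) • (Jm * (P * Jn)) := by
              simp only [Matrix.mul_sub, Matrix.sub_mul, Matrix.smul_mul, Matrix.mul_smul,
                Matrix.one_mul, Matrix.mul_one, smul_sub, smul_smul]
              module
          _ = P - (1 / Real.sqrt ((m : ℝ) * n)) • Jmn := by
              rw [hPJ, hJmP, Matrix.mul_smul, hJJ]
              ext i j
              simp only [Matrix.add_apply, Matrix.sub_apply, Matrix.smul_apply, hJmn,
                Matrix.of_apply, smul_eq_mul, mul_one]
              rw [hdmn, hdnm, hmul, ← hsqm, ← hsqn]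
              field_simp
              ring
      rw [hK, key]
      abel
  · rintro ⟨Q, hQ, hP⟩
    rw [hK] at hP
    set c : ℝ := 1 / Real.sqrt ((m : ℝ) * n) with hc
    have hJtU : Jmnᵀ * U = 0 := by
      ext j k
      have := congrFun hU1 k
      simp only [Matrix.mulVec, dotProduct, Matrix.transpose_apply, mul_one,
        Pi.zero_apply] at this
      simp only [Matrix.mul_apply, Matrix.transpose_apply, hJmn, Matrix.of_apply, one_mul,
        Matrix.zero_apply]
      exact this
    subst hP
    refine ⟨?_, ?_, ?_⟩
    · -- PᵀP = 1
      have t1 : (c • Jmn)ᵀ * (c • Jmn) = ((n : ℝ))⁻¹ • Jn := by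
        ext i j
        simp only [Matrix.mul_apply, Matrix.transpose_apply, Matrix.smul_apply, hJmn, hJn,
          Matrix.of_apply, smul_eq_mul, mul_one, Finset.sum_const, Finset.card_univ,
          Fintype.card_fin, nsmul_eq_mul]
        rw [hc, hmul, ← hsqm, ← hsqn]
        field_simp
      have t2 : (c • Jmn)ᵀ * (U * Q * Vᵀ) = 0 := by
        calc (c • Jmn)ᵀ * (U * Q * Vᵀ) = c • ((Jmnᵀ * U) * (Q * Vᵀ)) := by
              simp only [Matrix.transpose_smul, Matrix.smul_mul, Matrix.mul_assoc]
          _ = 0 := by rw [hJtU, Matrix.zero_mul, smul_zero]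
      have t3 : (U * Q * Vᵀ)ᵀ * (c • Jmn) = 0 := by
        calc (U * Q * Vᵀ)ᵀ * (c • Jmn) = c • (V * (Qᵀ * (Uᵀ * Jmn))) := by
              simp only [Matrix.transpose_mul, Matrix.transpose_transpose, Matrix.mul_smul,
                Matrix.mul_assoc]
          _ = 0 := by rw [hUtJ, Matrix.mul_zero, Matrix.mul_zero, smul_zero]
      have t4 : (U * Q * Vᵀ)ᵀ * (U * Q * Vᵀ) = 1 - ((n : ℝ))⁻¹ • Jn := by
        calc (U * Q * Vᵀ)ᵀ * (U * Q * Vᵀ)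
            = V * (Qᵀ * ((Uᵀ * U) * (Q * Vᵀ))) := by
              simp only [Matrix.transpose_mul, Matrix.transpose_transpose, Matrix.mul_assoc]
          _ = V * Vᵀ := by
              rw [hU2, Matrix.one_mul, ← Matrix.mul_assoc Qᵀ Q Vᵀ, hQ, Matrix.one_mul]
          _ = 1 - ((n : ℝ))⁻¹ • Jn := hVV
      rw [Matrix.transpose_add, Matrix.add_mul, Matrix.mul_add, Matrix.mul_add,
        t1, t2, t3, t4]
      abel
    · -- row sums
      funext i
      rw [Matrix.add_mulVec, ← Matrix.mulVec_mulVec, ← Matrix.mulVec_mulVec, hV1,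
        Matrix.mulVec_zero, Matrix.mulVec_zero]
      simp only [Pi.add_apply, Pi.zero_apply, add_zero, Matrix.mulVec, dotProduct,
        Matrix.smul_apply, hJmn, Matrix.of_apply, smul_eq_mul, mul_one, Finset.sum_const,
        Finset.card_univ, Fintype.card_fin, nsmul_eq_mul]
      rw [hc, hmul, hdnm, ← hsqn]
      field_simp
    · -- column sums
      funext j
      rw [Matrix.transpose_add, Matrix.add_mulVec]
      have : (U * Q * Vᵀ)ᵀ *ᵥ (fun _ => (1 : ℝ)) = 0 := by
        simp only [Matrix.transpose_mul, Matrix.transpose_transpose, Matrix.mul_assoc]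
        rw [← Matrix.mulVec_mulVec, ← Matrix.mulVec_mulVec, hU1, Matrix.mulVec_zero,
          Matrix.mulVec_zero]
      rw [this]
      simp only [Pi.add_apply, Pi.zero_apply, add_zero, Matrix.mulVec, dotProduct,
        Matrix.transpose_apply, Matrix.smul_apply, hJmn, Matrix.of_apply, smul_eq_mul, mul_one,
        Finset.sum_const, Finset.card_univ, Fintype.card_fin, nsmul_eq_mul]
      rw [hc, hmul, hdmn, ← hsqm]
      field_simp
end
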